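/- If f : ℝ² → ℝ² preserves all unit distances (d(x,y) = 1 implies d(f(x),f(y)) = 1), then f is an isometry. -/

import Mathlib

open Real
open scoped RealInnerProductSpace

local notation "E2" => EuclideanSpace ℝ (Fin 2)

lemma inner_coord (x y : E2) : ⟪x, y⟫ = x 0 * y 0 + x 1 * y 1 := by
  simp [PiLp.inner_apply, Fin.sum_univ_two, RCLike.inner_apply, conj_trivial]
  ring

lemma normsq_coord (x : E2) : ‖x‖^2 = (x 0)^2 + (x 1)^2 := by
  rw [← real_inner_self_eq_norm_sq, inner_coord]; ring

noncomputable def perp (v : E2) : E2 := (WithLp.equiv 2 (Fin 2 → ℝ)).symm ![-(v 1), v 0]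

lemma perp_apply0 (v : E2) : perp v 0 = -(v 1) := rfl
lemma perp_apply1 (v : E2) : perp v 1 = v 0 := rfl

lemma inner_perp (v : E2) : ⟪v, perp v⟫ = 0 := by
  rw [inner_coord, perp_apply0, perp_apply1]; ring

lemma norm_perp (v : E2) : ‖perp v‖ = ‖v‖ := by
  have h1 : ‖perp v‖^2 = ‖v‖^2 := by
    rw [normsq_coord, normsq_coord, perp_apply0, perp_apply1]; ring
  have := congrArg Real.sqrt h1
  simpa [Real.sqrt_sq, norm_nonneg] using this

lemma decomp (v p : E2) (hv : v ≠ 0) : ∃ α β : ℝ, p = α • v + β • perp v := by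
  have hn : (v 0)^2 + (v 1)^2 ≠ 0 := by
    intro hc
    apply hv
    have h0 : v 0 = 0 := by nlinarith [sq_nonneg (v 0), sq_nonneg (v 1)]
    have h1 : v 1 = 0 := by nlinarith [sq_nonneg (v 0), sq_nonneg (v 1)]
    ext i
    fin_cases i <;> simp [h0, h1]
  refine ⟨(p 0 * v 0 + p 1 * v 1) / ((v 0)^2 + (v 1)^2),
          (p 1 * v 0 - p 0 * v 1) / ((v 0)^2 + (v 1)^2), ?_⟩
  ext i
  fin_cases i <;>
    · simp [PiLp.add_apply, PiLp.smul_apply, perp_apply0, perp_apply1, smul_eq_mul]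
      field_simp
      ring

variable {x y z : E2}

lemma dist_eq_iff_sq {d : ℝ} (hd : 0 ≤ d) : dist x y = d ↔ ‖x - y‖^2 = d^2 := by
  rw [dist_eq_norm]
  constructor
  · intro h; rw [h]
  · intro h
    have := congrArg Real.sqrt h
    simpa [Real.sqrt_sq, norm_nonneg, hd] using this

-- expansion of norms squared via inner products
lemma normsq_comb (e1 e2 : E2) (h1 : ‖e1‖ = 1) (h2 : ‖e2‖ = 1) (h12 : ⟪e1, e2⟫ = 0)
    (s t : ℝ) : ‖s • e1 + t • e2‖^2 = s^2 + t^2 := by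
  have := norm_add_sq_real (s • e1) (t • e2)
  rw [real_inner_smul_left, real_inner_smul_right, h12, norm_smul, norm_smul, h1, h2] at this
  simp at this
  rw [this]
  try ring_nf

lemma key_dist (x e1 e2 : E2) (h1 : ‖e1‖ = 1) (h2 : ‖e2‖ = 1) (h12 : ⟪e1, e2⟫ = 0)
    (s t s' t' : ℝ) :
    dist (x + s • e1 + t • e2) (x + s' • e1 + t' • e2)
      = Real.sqrt ((s - s')^2 + (t - t')^2) := by
  rw [dist_eq_norm]
  have he : (x + s • e1 + t • e2) - (x + s' • e1 + t' • e2) = (s - s') • e1 + (t - t') • e2 := by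
    module
  rw [he]
  have := normsq_comb e1 e2 h1 h2 h12 (s - s') (t - t')
  rw [← this, Real.sqrt_sq (norm_nonneg _)]

lemma frame (hxy : x ≠ y) :
    ∃ e1 e2 : E2, ‖e1‖ = 1 ∧ ‖e2‖ = 1 ∧ ⟪e1, e2⟫ = 0 ∧ y = x + dist x y • e1 + (0:ℝ) • e2 := by
  set r := dist x y with hr
  have hr0 : 0 < r := dist_pos.2 hxy
  refine ⟨r⁻¹ • (y - x), perp (r⁻¹ • (y - x)), ?_, ?_, inner_perp _, ?_⟩
  · rw [norm_smul]
    rw [show ‖y - x‖ = r by rw [← dist_eq_norm, dist_comm]]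
    rw [Real.norm_eq_abs, abs_of_pos (inv_pos.2 hr0)]
    exact inv_mul_cancel₀ (ne_of_gt hr0)
  · rw [norm_perp, norm_smul]
    rw [show ‖y - x‖ = r by rw [← dist_eq_norm, dist_comm]]
    rw [Real.norm_eq_abs, abs_of_pos (inv_pos.2 hr0)]
    exact inv_mul_cancel₀ (ne_of_gt hr0)
  · rw [smul_smul, mul_inv_cancel₀ (ne_of_gt hr0)]
    simp
lemma normsq_decomp (e : E2) (α β : ℝ) : ‖α • e + β • perp e‖^2 = (α^2 + β^2) * ‖e‖^2 := by
  have h := norm_add_sq_real (α • e) (β • perp e)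
  rw [real_inner_smul_left, real_inner_smul_right, inner_perp, norm_smul, norm_smul, norm_perp] at h
  rw [h]
  simp [Real.norm_eq_abs]
  rw [mul_pow, mul_pow, sq_abs, sq_abs]
  ring

lemma inner_perp' (v : E2) : ⟪perp v, v⟫ = 0 := by
  rw [inner_coord, perp_apply0, perp_apply1]; ring

lemma inner_decomp (e : E2) (α β : ℝ) : ⟪α • e + β • perp e, e⟫ = α * ‖e‖^2 := by
  rw [inner_add_left, real_inner_smul_left, real_inner_smul_left, inner_perp',
    real_inner_self_eq_norm_sq]
  ring

lemma exists_two_circles (x y : E2) {r d1 d2 : ℝ} (hxy : dist x y = r) (hr : 0 < r)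
    (h1 : 0 ≤ d1) (h2 : 0 ≤ d2) (hlo : |d1 - d2| ≤ r) (hhi : r ≤ d1 + d2) :
    ∃ z, dist x z = d1 ∧ dist y z = d2 := by
  have hxy' : x ≠ y := by
    intro hc; rw [hc, dist_self] at hxy; exact absurd hxy.symm (ne_of_gt hr)
  obtain ⟨e1, e2, he1, he2, he12, hy⟩ := frame hxy'
  rw [hxy] at hy
  set ξ : ℝ := (d1^2 - d2^2 + r^2)/(2*r) with hξdef
  have hxi : 2*r*ξ = d1^2 - d2^2 + r^2 := by rw [hξdef]; field_simp [ne_of_gt hr]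
  have habs := abs_le.1 hlo
  have hηsq : 0 ≤ d1^2 - ξ^2 := by
    have key : (2*r*d1)^2 - (2*r*ξ)^2 ≥ 0 := by
      rw [hxi]
      have f1 : 0 ≤ d2 - d1 + r := by linarith [habs.1]
      have f2 : 0 ≤ d2 + d1 - r := by linarith
      have f3 : 0 ≤ d1 + r - d2 := by linarith [habs.2]
      have f4 : 0 ≤ d1 + r + d2 := by linarith
      nlinarith [mul_nonneg (mul_nonneg f1 f2) (mul_nonneg f3 f4)]
    have hr2 : (0:ℝ) < r^2 := by positivity
    by_contra hcon
    push_neg at hcon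
    have hneg : 4*r^2*(d1^2 - ξ^2) < 0 := by
      apply mul_neg_of_pos_of_neg (by positivity)
      linarith
    nlinarith [key]
  set η : ℝ := Real.sqrt (d1^2 - ξ^2) with hηdef
  have hη2 : η^2 = d1^2 - ξ^2 := Real.sq_sqrt hηsq
  refine ⟨x + ξ • e1 + η • e2, ?_, ?_⟩
  · have hx0 : x = x + (0:ℝ) • e1 + (0:ℝ) • e2 := by simp
    nth_rewrite 1 [hx0]
    rw [key_dist x e1 e2 he1 he2 he12 0 0 ξ η]
    rw [show (0-ξ)^2 + (0-η)^2 = d1^2 by linear_combination hη2]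
    exact Real.sqrt_sq h1
  · rw [hy, key_dist x e1 e2 he1 he2 he12 r 0 ξ η]
    rw [show (r-ξ)^2 + (0-η)^2 = d2^2 by linear_combination hη2 - hxi]
    exact Real.sqrt_sq h2

lemma IM (U V X Y : E2) {d P Q : ℝ} (hd : 0 < d) (hUV : dist U V = d)
    (hXU : dist X U = P) (hXV : dist X V = P) (hYU : dist Y U = Q) (hYV : dist Y V = Q) :
    ∃ B C : ℝ, 0 ≤ B ∧ 0 ≤ C ∧ B^2 = P^2 - d^2/4 ∧ C^2 = Q^2 - d^2/4 ∧
      (dist X Y = B + C ∨ dist X Y = |B - C|) := by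
  set e := V - U with hedef
  have hne : ‖e‖ = d := by rw [hedef, ← dist_eq_norm, dist_comm]; exact hUV
  have he0 : e ≠ 0 := by
    intro hc; rw [hc, norm_zero] at hne; exact absurd hne.symm (ne_of_gt hd)
  obtain ⟨α, β, hp⟩ := decomp e (X - U) he0
  obtain ⟨γ, δ, hq⟩ := decomp e (Y - U) he0
  have hd2 : (0:ℝ) < d^2 := by positivity
  -- norms
  have hpn : ‖X - U‖^2 = (α^2 + β^2) * d^2 := by rw [hp, normsq_decomp, hne]
  have hqn : ‖Y - U‖^2 = (γ^2 + δ^2) * d^2 := by rw [hq, normsq_decomp, hne]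
  have hXU' : ‖X - U‖ = P := by rw [← dist_eq_norm]; exact hXU
  have hYU' : ‖Y - U‖ = Q := by rw [← dist_eq_norm]; exact hYU
  have hXV' : ‖(X - U) - e‖ = P := by
    rw [hedef, show X - U - (V - U) = X - V by abel, ← dist_eq_norm]; exact hXV
  have hYV' : ‖(Y - U) - e‖ = Q := by
    rw [hedef, show Y - U - (V - U) = Y - V by abel, ← dist_eq_norm]; exact hYV
  -- inner products
  have hip : ⟪X - U, e⟫ = α * d^2 := by rw [hp, inner_decomp, hne]
  have hiq : ⟪Y - U, e⟫ = γ * d^2 := by rw [hq, inner_decomp, hne]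
  have hsub1 := norm_sub_sq_real (X - U) e
  rw [hXV', hXU', hip, hne] at hsub1
  have hsub2 := norm_sub_sq_real (Y - U) e
  rw [hYV', hYU', hiq, hne] at hsub2
  have hα : α = 1/2 := by
    have : α * d^2 = (1/2) * d^2 := by linarith
    exact mul_right_cancel₀ (ne_of_gt hd2) this
  have hγ : γ = 1/2 := by
    have : γ * d^2 = (1/2) * d^2 := by linarith
    exact mul_right_cancel₀ (ne_of_gt hd2) this
  have hβ2 : (β*d)^2 = P^2 - d^2/4 := by
    rw [hXU'] at hpn; rw [hα] at hpn; linear_combination -hpn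
  have hδ2 : (δ*d)^2 = Q^2 - d^2/4 := by
    rw [hYU'] at hqn; rw [hγ] at hqn; linear_combination -hqn
  -- distance X Y
  have hXY : dist X Y = |β - δ| * d := by
    have hXYv : X - Y = (β - δ) • perp e := by
      rw [hα] at hp
      rw [hγ] at hq
      have hXY' : X - Y = (X - U) - (Y - U) := by abel
      rw [hXY', hp, hq, sub_smul]
      abel
    rw [dist_eq_norm, hXYv, norm_smul, norm_perp, hne, Real.norm_eq_abs]
  refine ⟨abs β * d, abs δ * d, by positivity, by positivity, ?_, ?_, ?_⟩
  · rw [show (abs β*d)^2 = (β*d)^2 by rw [mul_pow, mul_pow, sq_abs]]; exact hβ2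
  · rw [show (abs δ*d)^2 = (δ*d)^2 by rw [mul_pow, mul_pow, sq_abs]]; exact hδ2
  · rw [hXY]
    rcases le_total 0 β with hβ0 | hβ0 <;> rcases le_total 0 δ with hδ0 | hδ0
    · right
      rw [abs_of_nonneg hβ0, abs_of_nonneg hδ0, ← sub_mul, abs_mul, abs_of_pos hd]
    · left
      rw [abs_of_nonneg hβ0, abs_of_nonpos hδ0, abs_of_nonneg (by linarith : (0:ℝ) ≤ β - δ)]
      ring
    · left
      rw [abs_of_nonpos hβ0, abs_of_nonneg hδ0, abs_of_nonpos (by linarith : β - δ ≤ 0)]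
      ring
    · right
      rw [abs_of_nonpos hβ0, abs_of_nonpos hδ0, ← sub_mul, abs_mul, abs_of_pos hd]
      rw [show -β - -δ = -(β - δ) by ring, abs_neg]
lemma I2img (A B C D : E2) {a : ℝ} (ha : 0 < a) (hAB : dist A B = a) (hBC : dist B C = a)
    (hAC : dist A C = Real.sqrt 3 * a) (hCD : dist C D = a) (hBD : dist B D = Real.sqrt 3 * a)
    (hle : dist A D ≤ 2*a) : dist A D = 2*a := by
  have h3 : (Real.sqrt 3 * a)^2 = 3 * a^2 := by
    rw [mul_pow, Real.sq_sqrt (by norm_num : (3:ℝ) ≥ 0)]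
  set e := C - B with hedef
  have hne : ‖e‖ = a := by rw [hedef, ← dist_eq_norm, dist_comm]; exact hBC
  have he0 : e ≠ 0 := by
    intro hc; rw [hc, norm_zero] at hne; exact absurd hne.symm (ne_of_gt ha)
  have ha2 : (0:ℝ) < a^2 := by positivity
  obtain ⟨α, β, hp⟩ := decomp e (A - B) he0
  obtain ⟨γ, δ, hq⟩ := decomp e (D - B) he0
  have hpn : ‖A - B‖^2 = (α^2 + β^2) * a^2 := by rw [hp, normsq_decomp, hne]
  have hqn : ‖D - B‖^2 = (γ^2 + δ^2) * a^2 := by rw [hq, normsq_decomp, hne]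
  have hAB' : ‖A - B‖ = a := by rw [← dist_eq_norm]; exact hAB
  have hDB' : ‖D - B‖ = Real.sqrt 3 * a := by rw [← dist_eq_norm, dist_comm]; exact hBD
  have hAC' : ‖(A - B) - e‖ = Real.sqrt 3 * a := by
    rw [hedef, show A - B - (C - B) = A - C by abel, ← dist_eq_norm]; exact hAC
  have hDC' : ‖(D - B) - e‖ = a := by
    rw [hedef, show D - B - (C - B) = D - C by abel, ← dist_eq_norm, dist_comm]; exact hCD
  have hip : ⟪A - B, e⟫ = α * a^2 := by rw [hp, inner_decomp, hne]
  have hiq : ⟪D - B, e⟫ = γ * a^2 := by rw [hq, inner_decomp, hne]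
  have hsub1 := norm_sub_sq_real (A - B) e
  rw [hAC', hAB', hip, hne, h3] at hsub1
  have hsub2 := norm_sub_sq_real (D - B) e
  rw [hDC', hDB', hiq, hne, h3] at hsub2
  have hα : α = -(1/2) := by
    have : α * a^2 = (-(1/2)) * a^2 := by linarith
    exact mul_right_cancel₀ (ne_of_gt ha2) this
  have hγ : γ = 3/2 := by
    have : γ * a^2 = (3/2) * a^2 := by linarith
    exact mul_right_cancel₀ (ne_of_gt ha2) this
  rw [hAB'] at hpn
  rw [hDB', h3] at hqn
  rw [hα] at hpn
  rw [hγ] at hqn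
  have hβ2 : β^2 = 3/4 := by
    have : β^2 * a^2 = (3/4) * a^2 := by linear_combination -hpn
    exact mul_right_cancel₀ (ne_of_gt ha2) this
  have hδ2 : δ^2 = 3/4 := by
    have : δ^2 * a^2 = (3/4) * a^2 := by linear_combination -hqn
    exact mul_right_cancel₀ (ne_of_gt ha2) this
  -- A - D
  have hAD : ‖A - D‖^2 = ((α - γ)^2 + (β - δ)^2) * a^2 := by
    have hADv : A - D = (α - γ) • e + (β - δ) • perp e := by
      have h' : A - D = (A - B) - (D - B) := by abel
      rw [h', hp, hq, sub_smul, sub_smul]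
      abel
    rw [hADv, normsq_decomp, hne]
  rw [hα, hγ] at hAD
  have hcases : β * δ = 3/4 ∨ β * δ = -(3/4) := by
    have h9 : (β*δ - 3/4) * (β*δ + 3/4) = 0 := by linear_combination δ^2 * hβ2 + (3/4) * hδ2
    rcases mul_eq_zero.1 h9 with h | h
    · left; linarith
    · right; linarith
  have hADd : dist A D = ‖A - D‖ := dist_eq_norm A D
  rcases hcases with hc | hc
  · have : ‖A - D‖^2 = 4 * a^2 := by rw [hAD]; linear_combination a^2*hβ2 + a^2*hδ2 - 2*a^2*hc
    rw [hADd]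
    have h4 : (2*a)^2 = 4*a^2 := by ring
    have := congrArg Real.sqrt (this.trans h4.symm)
    rwa [Real.sqrt_sq (norm_nonneg _), Real.sqrt_sq (by linarith : (0:ℝ) ≤ 2*a)] at this
  · exfalso
    have h7 : ‖A - D‖^2 = 7 * a^2 := by rw [hAD]; linear_combination a^2*hβ2 + a^2*hδ2 - 2*a^2*hc
    have hsq : dist A D ^ 2 ≤ (2*a)^2 := by
      apply pow_le_pow_left₀ dist_nonneg hle
    rw [hADd] at hsq
    nlinarith [h7, ha2]

lemma mid_forced (A M B : E2) {a : ℝ} (ha : 0 ≤ a) (h1 : dist A M = a) (h2 : dist M B = a)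
    (h3 : dist A B = 2*a) : B = (2:ℝ) • M - A := by
  have hu : ‖A - M‖ = a := by rw [← dist_eq_norm]; exact h1
  have hv : ‖B - M‖ = a := by rw [← dist_eq_norm, dist_comm]; exact h2
  have huv : ‖(A - M) - (B - M)‖ = 2*a := by
    rw [show (A - M) - (B - M) = A - B by abel, ← dist_eq_norm]; exact h3
  have hinner := norm_sub_sq_real (A - M) (B - M)
  rw [hu, hv, huv] at hinner
  have hi : ⟪A - M, B - M⟫ = -(a^2) := by nlinarith [hinner]
  have hz : ‖(A - M) + (B - M)‖^2 = 0 := by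
    rw [norm_add_sq_real, hu, hv, hi]; ring
  have hz2 : (A - M) + (B - M) = 0 := by
    have := Real.sqrt_eq_zero'.2 (le_of_eq hz)
    rw [Real.sqrt_sq (norm_nonneg _)] at this
    exact norm_eq_zero.1 this
  have : A + B - (M + M) = 0 := by rw [show A + B - (M+M) = (A-M)+(B-M) by abel]; exact hz2
  have hAB : A + B = M + M := sub_eq_zero.1 this
  rw [two_smul]
  rw [← hAB]
  abel
def Pres (f : E2 → E2) (d : ℝ) : Prop :=
  0 < d ∧ ∀ x y : E2, dist x y = d → dist (f x) (f y) = d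

lemma eq_of_sq_eq {u v : ℝ} (hu : 0 ≤ u) (hv : 0 ≤ v) (hsq : u^2 = v^2) : u = v := by
  rw [← Real.sqrt_sq hu, hsq, Real.sqrt_sq hv]

section BQ

variable {f : E2 → E2}

lemma pres_one (h : ∀ x y : E2, dist x y = 1 → dist (f x) (f y) = 1) : Pres f 1 :=
  ⟨one_pos, h⟩

lemma sqrt3_pos : (0:ℝ) < Real.sqrt 3 := Real.sqrt_pos.2 (by norm_num)

lemma sqrt3_gt_one : (1:ℝ) < Real.sqrt 3 := by
  have := Real.sq_sqrt (by norm_num : (3:ℝ) ≥ 0)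
  nlinarith [sqrt3_pos]

lemma rhomb {a : ℝ} (ha : Pres f a) :
    ∀ x y : E2, dist x y = Real.sqrt 3 * a →
      dist (f x) (f y) = 0 ∨ dist (f x) (f y) = Real.sqrt 3 * a := by
  obtain ⟨ha0, hap⟩ := ha
  intro x y hxy
  have h3 : Real.sqrt 3 ^ 2 = 3 := Real.sq_sqrt (by norm_num)
  have hr0 : (0:ℝ) < Real.sqrt 3 * a := mul_pos sqrt3_pos ha0
  have hxy' : x ≠ y := by
    intro hc; rw [hc, dist_self] at hxy; exact absurd hxy.symm (ne_of_gt hr0)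
  obtain ⟨e1, e2, he1, he2, he12, hy⟩ := frame hxy'
  rw [hxy] at hy
  set z := x + (Real.sqrt 3 * a/2) • e1 + (a/2) • e2 with hz
  set w := x + (Real.sqrt 3 * a/2) • e1 + (-(a/2)) • e2 with hw
  have hx0 : x = x + (0:ℝ) • e1 + (0:ℝ) • e2 := by simp
  have hdzw : dist z w = a := by
    rw [hz, hw, key_dist x e1 e2 he1 he2 he12]
    rw [show (Real.sqrt 3 * a/2 - Real.sqrt 3 * a/2)^2 + (a/2 - -(a/2))^2 = a^2 by ring]
    exact Real.sqrt_sq (le_of_lt ha0)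
  have hdxz : dist x z = a := by
    nth_rewrite 1 [hx0]
    rw [hz, key_dist x e1 e2 he1 he2 he12]
    rw [show (0 - Real.sqrt 3 * a/2)^2 + (0 - a/2)^2 = a^2 by linear_combination (a^2/4) * h3]
    exact Real.sqrt_sq (le_of_lt ha0)
  have hdxw : dist x w = a := by
    nth_rewrite 1 [hx0]
    rw [hw, key_dist x e1 e2 he1 he2 he12]
    rw [show (0 - Real.sqrt 3 * a/2)^2 + (0 - -(a/2))^2 = a^2 by linear_combination (a^2/4) * h3]
    exact Real.sqrt_sq (le_of_lt ha0)
  have hdyz : dist y z = a := by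
    rw [hy, hz, key_dist x e1 e2 he1 he2 he12]
    rw [show (Real.sqrt 3 * a - Real.sqrt 3 * a/2)^2 + (0 - a/2)^2 = a^2 by linear_combination (a^2/4) * h3]
    exact Real.sqrt_sq (le_of_lt ha0)
  have hdyw : dist y w = a := by
    rw [hy, hw, key_dist x e1 e2 he1 he2 he12]
    rw [show (Real.sqrt 3 * a - Real.sqrt 3 * a/2)^2 + (0 - -(a/2))^2 = a^2 by linear_combination (a^2/4) * h3]
    exact Real.sqrt_sq (le_of_lt ha0)
  -- images
  have izw : dist (f z) (f w) = a := hap _ _ hdzw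
  have ixz : dist (f x) (f z) = a := hap _ _ hdxz
  have ixw : dist (f x) (f w) = a := hap _ _ hdxw
  have iyz : dist (f y) (f z) = a := hap _ _ hdyz
  have iyw : dist (f y) (f w) = a := hap _ _ hdyw
  obtain ⟨B, C, hB0, hC0, hB2, hC2, hor⟩ :=
    IM (f z) (f w) (f x) (f y) ha0 izw ixz ixw iyz iyw
  have hBC : B = C := eq_of_sq_eq hB0 hC0 (by rw [hB2, hC2])
  rcases hor with hsum | hdiff
  · right
    rw [hsum, hBC]
    refine eq_of_sq_eq (by linarith) (le_of_lt hr0) ?_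
    rw [show (C + C)^2 = 4 * C^2 by ring, hC2]
    linear_combination (-(a^2)) * h3
  · left
    rw [hdiff, hBC]
    simp

lemma pres_sqrt3 {a : ℝ} (ha : Pres f a) : Pres f (Real.sqrt 3 * a) := by
  have ha0 := ha.1
  have hr0 : (0:ℝ) < Real.sqrt 3 * a := mul_pos sqrt3_pos ha0
  refine ⟨hr0, fun x y hxy => ?_⟩
  obtain ⟨z, hxz, hyz⟩ := exists_two_circles x y hxy hr0 (le_of_lt ha0) (le_of_lt hr0)
    (by rw [abs_le]; constructor <;> nlinarith [sqrt3_gt_one]) (by nlinarith [sqrt3_gt_one])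
  have ixz : dist (f x) (f z) = a := ha.2 _ _ hxz
  rcases rhomb ha x y hxy with h0 | hok
  · exfalso
    have hfxy : f x = f y := dist_eq_zero.1 h0
    rcases rhomb ha y z hyz with k0 | k3
    · rw [← hfxy] at k0
      rw [ixz] at k0
      exact absurd k0 (ne_of_gt ha0)
    · rw [← hfxy, ixz] at k3
      nlinarith [sqrt3_gt_one]
  · exact hok

lemma pres_two {a : ℝ} (ha : Pres f a) : Pres f (2 * a) := by
  have ha0 := ha.1
  have h3' := pres_sqrt3 (f := f) ha
  have h3 : Real.sqrt 3 ^ 2 = 3 := Real.sq_sqrt (by norm_num)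
  have hr0 : (0:ℝ) < 2 * a := by linarith
  refine ⟨hr0, fun x y hxy => ?_⟩
  have hxy' : x ≠ y := by
    intro hc; rw [hc, dist_self] at hxy; exact absurd hxy.symm (ne_of_gt hr0)
  obtain ⟨e1, e2, he1, he2, he12, hy⟩ := frame hxy'
  rw [hxy] at hy
  have hx0 : x = x + (0:ℝ) • e1 + (0:ℝ) • e2 := by simp
  set p := x + (a/2) • e1 + (Real.sqrt 3 * a/2) • e2 with hp
  set q := x + (3*a/2) • e1 + (Real.sqrt 3 * a/2) • e2 with hq
  set m := x + a • e1 + (0:ℝ) • e2 with hm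
  have hdxp : dist x p = a := by
    nth_rewrite 1 [hx0]
    rw [hp, key_dist x e1 e2 he1 he2 he12]
    rw [show (0 - a/2)^2 + (0 - Real.sqrt 3 * a/2)^2 = a^2 by linear_combination (a^2/4) * h3]
    exact Real.sqrt_sq (le_of_lt ha0)
  have hdpq : dist p q = a := by
    rw [hp, hq, key_dist x e1 e2 he1 he2 he12]
    rw [show (a/2 - 3*a/2)^2 + (Real.sqrt 3 * a/2 - Real.sqrt 3 * a/2)^2 = a^2 by ring]
    exact Real.sqrt_sq (le_of_lt ha0)
  have hdqy : dist q y = a := by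
    rw [hy, hq, dist_comm, key_dist x e1 e2 he1 he2 he12]
    rw [show (2*a - 3*a/2)^2 + (0 - Real.sqrt 3 * a/2)^2 = a^2 by linear_combination (a^2/4) * h3]
    exact Real.sqrt_sq (le_of_lt ha0)
  have hdxq : dist x q = Real.sqrt 3 * a := by
    nth_rewrite 1 [hx0]
    rw [hq, key_dist x e1 e2 he1 he2 he12]
    rw [show (0 - 3*a/2)^2 + (0 - Real.sqrt 3 * a/2)^2 = (Real.sqrt 3 * a)^2 by linear_combination (-(3*a^2/4)) * h3]
    exact Real.sqrt_sq (le_of_lt h3'.1)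
  have hdpy : dist p y = Real.sqrt 3 * a := by
    rw [hy, hp, dist_comm, key_dist x e1 e2 he1 he2 he12]
    rw [show (2*a - a/2)^2 + (0 - Real.sqrt 3 * a/2)^2 = (Real.sqrt 3 * a)^2 by linear_combination (-(3*a^2/4)) * h3]
    exact Real.sqrt_sq (le_of_lt h3'.1)
  have hdxm : dist x m = a := by
    nth_rewrite 1 [hx0]
    rw [hm, key_dist x e1 e2 he1 he2 he12]
    rw [show (0 - a)^2 + ((0:ℝ) - 0)^2 = a^2 by ring]
    exact Real.sqrt_sq (le_of_lt ha0)
  have hdmy : dist m y = a := by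
    rw [hy, hm, key_dist x e1 e2 he1 he2 he12]
    rw [show (a - 2*a)^2 + ((0:ℝ) - 0)^2 = a^2 by ring]
    exact Real.sqrt_sq (le_of_lt ha0)
  have hle : dist (f x) (f y) ≤ 2 * a := by
    calc dist (f x) (f y) ≤ dist (f x) (f m) + dist (f m) (f y) := dist_triangle _ _ _
    _ = 2 * a := by rw [ha.2 _ _ hdxm, ha.2 _ _ hdmy]; ring
  exact I2img (f x) (f p) (f q) (f y) ha0 (ha.2 _ _ hdxp) (ha.2 _ _ hdpq)
    (h3'.2 _ _ hdxq) (ha.2 _ _ hdqy) (h3'.2 _ _ hdpy) hle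

lemma pres_nat_mul {a : ℝ} (ha : Pres f a) (n : ℕ) : Pres f ((n + 1 : ℝ) * a) := by
  have ha0 := ha.1
  have h2a := pres_two (f := f) ha
  have hr0 : (0:ℝ) < (n + 1 : ℝ) * a := by positivity
  refine ⟨hr0, fun x y hxy => ?_⟩
  have hxy' : x ≠ y := by
    intro hc; rw [hc, dist_self] at hxy; exact absurd hxy.symm (ne_of_gt hr0)
  obtain ⟨e1, e2, he1, he2, he12, hy⟩ := frame hxy'
  rw [hxy] at hy
  set g : ℕ → E2 := fun j => x + ((j : ℝ) * a) • e1 + (0:ℝ) • e2 with hg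
  have hdist : ∀ j k : ℕ, dist (g j) (g k) = |(j:ℝ) - (k:ℝ)| * a := by
    intro j k
    rw [hg]
    simp only []
    rw [key_dist x e1 e2 he1 he2 he12]
    rw [show ((j:ℝ)*a - (k:ℝ)*a)^2 + ((0:ℝ)-0)^2 = (|(j:ℝ) - (k:ℝ)| * a)^2 by
      rw [mul_pow, sq_abs]; ring]
    exact Real.sqrt_sq (by positivity)
  have hstep : ∀ j : ℕ, dist (g j) (g (j+1)) = a := by
    intro j
    rw [hdist]
    rw [show |(j:ℝ) - ((j+1:ℕ):ℝ)| = 1 by push_cast; rw [show (j:ℝ) - (j+1) = -1 by ring]; simp]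
    ring
  have hstep2 : ∀ j : ℕ, dist (g j) (g (j+2)) = 2*a := by
    intro j
    rw [hdist]
    rw [show |(j:ℝ) - ((j+2:ℕ):ℝ)| = 2 by push_cast; rw [show (j:ℝ) - (j+2) = -2 by ring]; simp]
  set w := f (g 1) - f (g 0) with hw
  have hclaim : ∀ j : ℕ, f (g j) = f (g 0) + (j:ℝ) • w ∧
      f (g (j+1)) = f (g 0) + ((j:ℝ)+1) • w := by
    intro j
    induction j with
    | zero =>
      constructor
      · simp
      · rw [hw]
        push_cast
        rw [zero_add, one_smul]
        abel
    | succ j ih =>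
      obtain ⟨ih1, ih2⟩ := ih
      have hmid := mid_forced (f (g j)) (f (g (j+1))) (f (g (j+2))) (le_of_lt ha0)
        (ha.2 _ _ (hstep j)) (ha.2 _ _ (hstep (j+1))) (h2a.2 _ _ (hstep2 j))
      constructor
      · push_cast; exact ih2
      · rw [show j + 1 + 1 = j + 2 from rfl] at *
        rw [hmid, ih1, ih2]
        push_cast
        module
  have hy' : y = g (n+1) := by
    rw [hy, hg]
    simp only []
    rw [show (((n+1:ℕ)):ℝ) = (n:ℝ)+1 by push_cast; ring]
  have hx' : x = g 0 := by rw [hg]; simp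
  rw [hx', hy']
  rw [dist_eq_norm, (hclaim n).2]
  rw [show f (g 0) - (f (g 0) + ((n:ℝ)+1) • w) = -(((n:ℝ)+1) • w) by abel]
  rw [norm_neg, norm_smul, Real.norm_eq_abs, abs_of_pos (by positivity : (0:ℝ) < (n:ℝ)+1)]
  have hnw : ‖w‖ = a := by
    rw [hw, ← dist_eq_norm]
    exact ha.2 _ _ ((hdist 1 0).trans (by norm_num))
  rw [hnw]
lemma pres_pyth {a b : ℝ} (ha : Pres f a) (hb : Pres f b) (hba : b < a) :
    Pres f (Real.sqrt (a^2 - b^2)) := by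
  have ha0 := ha.1
  have hb0 := hb.1
  have hab2 : (0:ℝ) < a^2 - b^2 := by nlinarith
  set r := Real.sqrt (a^2 - b^2) with hrdef
  have hr2 : r^2 = a^2 - b^2 := Real.sq_sqrt (le_of_lt hab2)
  have hr0 : 0 < r := Real.sqrt_pos.2 hab2
  have h2b := pres_two (f := f) hb
  refine ⟨hr0, fun x y hxy => ?_⟩
  have hxy' : x ≠ y := by
    intro hc; rw [hc, dist_self] at hxy; exact absurd hxy.symm (ne_of_gt hr0)
  obtain ⟨e1, e2, he1, he2, he12, hy⟩ := frame hxy'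
  rw [hxy] at hy
  have hx0 : x = x + (0:ℝ) • e1 + (0:ℝ) • e2 := by simp
  set u := x + r • e1 + b • e2 with hu
  set v := x + r • e1 + (-b) • e2 with hv
  have hduv : dist u v = 2*b := by
    rw [hu, hv, key_dist x e1 e2 he1 he2 he12]
    rw [show (r - r)^2 + (b - -b)^2 = (2*b)^2 by ring]
    exact Real.sqrt_sq (by linarith)
  have hdxu : dist x u = a := by
    nth_rewrite 1 [hx0]
    rw [hu, key_dist x e1 e2 he1 he2 he12]
    rw [show (0 - r)^2 + (0 - b)^2 = a^2 by linear_combination hr2]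
    exact Real.sqrt_sq (le_of_lt ha0)
  have hdxv : dist x v = a := by
    nth_rewrite 1 [hx0]
    rw [hv, key_dist x e1 e2 he1 he2 he12]
    rw [show (0 - r)^2 + (0 - -b)^2 = a^2 by linear_combination hr2]
    exact Real.sqrt_sq (le_of_lt ha0)
  have hdyu : dist y u = b := by
    rw [hy, hu, key_dist x e1 e2 he1 he2 he12]
    rw [show (r - r)^2 + (0 - b)^2 = b^2 by ring]
    exact Real.sqrt_sq (le_of_lt hb0)
  have hdyv : dist y v = b := by
    rw [hy, hv, key_dist x e1 e2 he1 he2 he12]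
    rw [show (r - r)^2 + (0 - -b)^2 = b^2 by ring]
    exact Real.sqrt_sq (le_of_lt hb0)
  obtain ⟨B, C, hB0, hC0, hB2, hC2, hor⟩ :=
    IM (f u) (f v) (f x) (f y) (by linarith : (0:ℝ) < 2*b) (h2b.2 _ _ hduv)
      (ha.2 _ _ hdxu) (ha.2 _ _ hdxv) (hb.2 _ _ hdyu) (hb.2 _ _ hdyv)
  have hC : C = 0 := by
    have : C^2 = 0 := by rw [hC2]; ring
    nlinarith [hC0]
  have hB : B = r := by
    refine eq_of_sq_eq hB0 (le_of_lt hr0) ?_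
    rw [hB2, hr2]; ring
  rcases hor with h1 | h1 <;> rw [h1, hB, hC] <;> simp [le_of_lt hr0]

lemma pres_nat (h : ∀ x y : E2, dist x y = 1 → dist (f x) (f y) = 1) (n : ℕ) (hn : 1 ≤ n) :
    Pres f (n : ℝ) := by
  obtain ⟨m, rfl⟩ := Nat.exists_eq_add_of_le hn
  have := pres_nat_mul (f := f) (pres_one h) m
  rw [show ((m:ℝ) + 1) * 1 = ((1 + m : ℕ) : ℝ) by push_cast; ring] at this
  exact this

lemma pres_sqrt_nat (h : ∀ x y : E2, dist x y = 1 → dist (f x) (f y) = 1) (t : ℕ) (ht : 1 ≤ t) :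
    Pres f (Real.sqrt t) := by
  -- q = (t^2+t)/2, p = q+1, b = sqrt(p^2-q^2) = sqrt(t^2+t+1)
  set q : ℕ := (t*t + t)/2 with hqdef
  have hdvd : 2 ∣ (t*t + t) := by
    rcases Nat.even_or_odd t with he | ho
    · obtain ⟨c, hc⟩ := he
      exact ⟨c*t + c, by rw [hc]; ring⟩
    · obtain ⟨c, hc⟩ := ho
      exact ⟨2*c*c + 3*c + 1, by rw [hc]; ring⟩
  have h2q : 2 * q = t*t + t := by
    rw [hqdef]; exact Nat.mul_div_cancel' hdvd
  have hq1 : 1 ≤ q := by nlinarith [h2q, ht]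
  have hpresq : Pres f (q : ℝ) := pres_nat h q hq1
  have hpresp : Pres f ((q+1 : ℕ) : ℝ) := pres_nat h (q+1) (by omega)
  have hqp : (q:ℝ) < ((q+1:ℕ):ℝ) := by push_cast; linarith
  have hb := pres_pyth (f := f) hpresp hpresq hqp
  have hbval : ((q+1:ℕ):ℝ)^2 - (q:ℝ)^2 = (t:ℝ)*t + t + 1 := by
    have h2q' : 2*(q:ℝ) = (t:ℝ)*t + t := by exact_mod_cast congrArg (Nat.cast : ℕ → ℝ) h2q
    push_cast
    linarith [h2q']
  rw [hbval] at hb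
  set b := Real.sqrt ((t:ℝ)*t + t + 1) with hbdef
  have hbnn : (0:ℝ) ≤ (t:ℝ)*t + t + 1 := by positivity
  have hb2 : b^2 = (t:ℝ)*t + t + 1 := Real.sq_sqrt hbnn
  have hb0 : 0 ≤ b := Real.sqrt_nonneg _
  have hprest1 : Pres f ((t+1 : ℕ) : ℝ) := pres_nat h (t+1) (by omega)
  have hblt : b < ((t+1:ℕ):ℝ) := by
    have ht1 : (1:ℝ) ≤ (t:ℝ) := by exact_mod_cast ht
    have hsq : b^2 < (((t+1:ℕ):ℝ))^2 := by push_cast; nlinarith [hb2]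
    nlinarith [hb0, hsq]
  have := pres_pyth (f := f) hprest1 hb hblt
  rw [show (((t+1:ℕ):ℝ))^2 - b^2 = (t:ℝ) by push_cast; linarith [hb2]] at this
  exact this
lemma pres_small (h : ∀ x y : E2, dist x y = 1 → dist (f x) (f y) = 1) (k : ℕ) (hk : 2 ≤ k) :
    Pres f (Real.sqrt ((k:ℝ) + 3/4) - Real.sqrt ((k:ℝ) - 1/4)) := by
  have hk2 : (2:ℝ) ≤ (k:ℝ) := by exact_mod_cast hk
  set A := Real.sqrt ((k:ℝ) + 3/4) with hAdef
  set Bq := Real.sqrt ((k:ℝ) - 1/4) with hBdef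
  have hA2 : A^2 = (k:ℝ) + 3/4 := Real.sq_sqrt (by linarith)
  have hB2 : Bq^2 = (k:ℝ) - 1/4 := Real.sq_sqrt (by linarith)
  have hA0 : 0 ≤ A := Real.sqrt_nonneg _
  have hB0 : 0 ≤ Bq := Real.sqrt_nonneg _
  have hr0 : 0 < A - Bq := by
    rw [sub_pos, hAdef, hBdef]
    exact Real.sqrt_lt_sqrt (by linarith) (by linarith)
  have hprod : (A - Bq) * (A + Bq) = 1 := by linear_combination hA2 - hB2
  have hA1 : (3/2:ℝ) ≤ A := by nlinarith
  have hB1 : (1:ℝ) ≤ Bq := by nlinarith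
  have hr1 : A - Bq ≤ 1 := by nlinarith
  refine ⟨hr0, fun x y hxy => ?_⟩
  -- upper bound 2 via a common unit-distance point
  obtain ⟨wpt, hw1, hw2⟩ := exists_two_circles x y hxy hr0 zero_le_one zero_le_one
    (by rw [show (1:ℝ) - 1 = 0 by ring, abs_zero]; linarith) (by linarith)
  have hle2 : dist (f x) (f y) ≤ 2 := by
    calc dist (f x) (f y) ≤ dist (f x) (f wpt) + dist (f wpt) (f y) := dist_triangle _ _ _
    _ = 2 := by
        rw [h _ _ hw1, dist_comm (f wpt) (f y), h _ _ hw2]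
        norm_num
  -- the configuration
  have hxy' : x ≠ y := by
    intro hc; rw [hc, dist_self] at hxy; exact absurd hxy.symm (ne_of_gt hr0)
  obtain ⟨e1, e2, he1, he2, he12, hy⟩ := frame hxy'
  rw [hxy] at hy
  have hx0 : x = x + (0:ℝ) • e1 + (0:ℝ) • e2 := by simp
  set u := x + A • e1 + (1/2 : ℝ) • e2 with hu
  set v := x + A • e1 + (-(1/2) : ℝ) • e2 with hv
  set K1 := Real.sqrt ((k:ℝ) + 1) with hK1def
  set K0 := Real.sqrt (k:ℝ) with hK0def
  have hK12 : K1^2 = (k:ℝ) + 1 := Real.sq_sqrt (by linarith)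
  have hK02 : K0^2 = (k:ℝ) := Real.sq_sqrt (by linarith)
  have hK10 : 0 ≤ K1 := Real.sqrt_nonneg _
  have hK00 : 0 ≤ K0 := Real.sqrt_nonneg _
  have hduv : dist u v = 1 := by
    rw [hu, hv, key_dist x e1 e2 he1 he2 he12]
    rw [show (A - A)^2 + ((1/2:ℝ) - -(1/2))^2 = 1^2 by ring]
    exact Real.sqrt_sq zero_le_one
  have hdxu : dist x u = K1 := by
    nth_rewrite 1 [hx0]
    rw [hu, key_dist x e1 e2 he1 he2 he12]
    rw [show (0 - A)^2 + ((0:ℝ) - 1/2)^2 = K1^2 by linear_combination hA2 - hK12]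
    exact Real.sqrt_sq hK10
  have hdxv : dist x v = K1 := by
    nth_rewrite 1 [hx0]
    rw [hv, key_dist x e1 e2 he1 he2 he12]
    rw [show (0 - A)^2 + ((0:ℝ) - -(1/2))^2 = K1^2 by linear_combination hA2 - hK12]
    exact Real.sqrt_sq hK10
  have hdyu : dist y u = K0 := by
    rw [hy, hu, key_dist x e1 e2 he1 he2 he12]
    rw [show (A - Bq - A)^2 + ((0:ℝ) - 1/2)^2 = K0^2 by linear_combination hB2 - hK02]
    exact Real.sqrt_sq hK00
  have hdyv : dist y v = K0 := by
    rw [hy, hv, key_dist x e1 e2 he1 he2 he12]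
    rw [show (A - Bq - A)^2 + ((0:ℝ) - -(1/2))^2 = K0^2 by linear_combination hB2 - hK02]
    exact Real.sqrt_sq hK00
  -- preserved distances
  have hpK1 : Pres f K1 := by
    have := pres_sqrt_nat h (k+1) (by omega)
    rwa [show Real.sqrt ((k+1:ℕ):ℝ) = K1 by rw [hK1def]; push_cast; ring_nf] at this
  have hpK0 : Pres f K0 := by
    have := pres_sqrt_nat h k (by omega)
    exact this
  obtain ⟨B', C', hB'0, hC'0, hB'2, hC'2, hor⟩ :=
    IM (f u) (f v) (f x) (f y) one_pos (h _ _ hduv) (hpK1.2 _ _ hdxu) (hpK1.2 _ _ hdxv)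
      (hpK0.2 _ _ hdyu) (hpK0.2 _ _ hdyv)
  have hB'A : B' = A := by
    refine eq_of_sq_eq hB'0 hA0 ?_
    rw [hB'2, hA2, hK12]; ring
  have hC'B : C' = Bq := by
    refine eq_of_sq_eq hC'0 hB0 ?_
    rw [hC'2, hB2, hK02]; ring
  rcases hor with hsum | hdiff
  · exfalso
    rw [hsum, hB'A, hC'B] at hle2
    linarith
  · rw [hdiff, hB'A, hC'B, abs_of_nonneg (by linarith : (0:ℝ) ≤ A - Bq)]
lemma sandwich (h : ∀ x y : E2, dist x y = 1 → dist (f x) (f y) = 1)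
    (x y : E2) (hxy : x ≠ y) {ε : ℝ} (hε : 0 < ε) :
    |dist (f x) (f y) - dist x y| ≤ ε := by
  have hr0 : 0 < dist x y := dist_pos.2 hxy
  set r := dist x y with hrdef
  -- choose k
  set k : ℕ := ⌈(2/ε)^2⌉₊ + 2 with hkdef
  have hk2 : 2 ≤ k := by omega
  have hkc : ((2:ℝ)/ε)^2 ≤ (k:ℝ) := by
    have h1 := Nat.le_ceil ((2/ε)^2)
    have h2 : ((⌈(2/ε)^2⌉₊ : ℝ)) ≤ (k:ℝ) := by
      rw [hkdef]; push_cast; linarith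
    linarith
  have hk2' : (2:ℝ) ≤ (k:ℝ) := by exact_mod_cast hk2
  set A := Real.sqrt ((k:ℝ) + 3/4) with hAdef
  set Bq := Real.sqrt ((k:ℝ) - 1/4) with hBdef
  have hA2 : A^2 = (k:ℝ) + 3/4 := Real.sq_sqrt (by linarith)
  have hB2 : Bq^2 = (k:ℝ) - 1/4 := Real.sq_sqrt (by linarith)
  have hA0 : 0 ≤ A := Real.sqrt_nonneg _
  have hB0 : 0 ≤ Bq := Real.sqrt_nonneg _
  set bk := A - Bq with hbkdef
  have hpbk : Pres f bk := pres_small h k hk2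
  have hbk0 : 0 < bk := hpbk.1
  -- bk is small : 2 * bk ≤ ε
  have hprod : bk * (A + Bq) = 1 := by rw [hbkdef]; linear_combination hA2 - hB2
  have hsqrtk : (2/ε) ≤ A := by
    have h1 : Real.sqrt ((2/ε)^2) ≤ A := by
      rw [hAdef]
      exact Real.sqrt_le_sqrt (by linarith)
    rwa [Real.sqrt_sq (by positivity : (0:ℝ) ≤ 2/ε)] at h1
  have hsmall : 2 * bk ≤ ε := by
    have h1 : bk * (2/ε) ≤ 1 := by
      calc bk * (2/ε) ≤ bk * (A + Bq) :=
        mul_le_mul_of_nonneg_left (by linarith) (le_of_lt hbk0)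
      _ = 1 := hprod
    have h2 : (2*bk)/ε ≤ 1 := by rw [show (2*bk)/ε = bk * (2/ε) by ring]; exact h1
    linarith [(div_le_one hε).1 h2]
  -- multiple of bk
  set n : ℕ := ⌈r / bk⌉₊ with hndef
  have hn1 : 1 ≤ n := by
    rw [hndef]
    exact Nat.ceil_pos.2 (div_pos hr0 hbk0)
  set a := (n:ℝ) * bk with hadef
  have hpa : Pres f a := by
    obtain ⟨m, hm⟩ := Nat.exists_eq_add_of_le hn1
    have := pres_nat_mul (f := f) hpbk m
    rwa [hadef, hm, show ((1 + m : ℕ):ℝ) = (m:ℝ) + 1 by push_cast; ring]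
  have hra : r ≤ a := by
    have h1 := Nat.le_ceil (r / bk)
    rw [hadef]
    calc r = (r / bk) * bk := by field_simp
    _ ≤ (n:ℝ) * bk := by
        apply mul_le_mul_of_nonneg_right _ (le_of_lt hbk0)
        exact_mod_cast h1
  have hau : a < r + bk := by
    have h1 : (n:ℝ) < r / bk + 1 := by
      rw [hndef]
      exact Nat.ceil_lt_add_one (by positivity)
    have h2 : (n:ℝ) * bk < (r / bk + 1) * bk := by
      exact mul_lt_mul_of_pos_right h1 hbk0
    rw [hadef]
    calc (n:ℝ) * bk < (r / bk + 1) * bk := h2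
    _ = r + bk := by field_simp
  have hbka : bk ≤ a := by
    rw [hadef]
    calc bk = 1 * bk := (one_mul bk).symm
    _ ≤ (n:ℝ) * bk := by
        apply mul_le_mul_of_nonneg_right _ (le_of_lt hbk0)
        exact_mod_cast hn1
  -- the witness point
  obtain ⟨wpt, hw1, hw2⟩ := exists_two_circles x y (r := r) (d1 := a) (d2 := bk)
    hrdef.symm hr0 (by linarith) (le_of_lt hbk0)
    (abs_le.2 ⟨by linarith, by linarith⟩) (by linarith)
  have ifw : dist (f x) (f wpt) = a := hpa.2 _ _ hw1
  have ifyw : dist (f y) (f wpt) = bk := hpbk.2 _ _ hw2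
  have hup : dist (f x) (f y) ≤ a + bk := by
    calc dist (f x) (f y) ≤ dist (f x) (f wpt) + dist (f wpt) (f y) := dist_triangle _ _ _
    _ = a + bk := by rw [ifw, dist_comm (f wpt) (f y), ifyw]
  have hlo : a - bk ≤ dist (f x) (f y) := by
    have := dist_triangle (f x) (f y) (f wpt)
    rw [ifw, ifyw] at this
    linarith
  rw [abs_le]
  constructor <;> linarith

end BQ

theorem stmt_0 (f : EuclideanSpace ℝ (Fin 2) → EuclideanSpace ℝ (Fin 2))
    (h : ∀ x y : EuclideanSpace ℝ (Fin 2), dist x y = 1 → dist (f x) (f y) = 1) :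
    Isometry f := by
  apply Isometry.of_dist_eq
  intro x y
  rcases eq_or_ne x y with rfl | hxy
  · simp
  · by_contra hne
    have habs : 0 < |dist (f x) (f y) - dist x y| := by
      rw [abs_pos, sub_ne_zero]
      exact hne
    have := sandwich h x y hxy (half_pos habs)
    linarith [this, habs]
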